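/- Let ⟨(p_n, k_n)⟩_{n∈ℕ} be a sequence of pairs consisting of a Silver condition and a natural number. Then there is a sequence ⟨q_n⟩_{n∈ℕ} of Silver conditions with q_n ≤_{k_n} p_n for all n, such that for all n ≠ m, the conditions q_n and q_m are strongly disjoint, i.e., there are infinitely many k ∈ dom(q_n) ∩ dom(q_m) with q_n(k) ≠ q_m(k). -/

import Mathlib

open Set

/-- The domain of a condition, viewed as a set of pairs. -/
def sDom (p : Set (ℕ × Bool)) : Set ℕ := {n | ∃ b, (n, b) ∈ p}

/-- A Silver condition: a partial function `ℕ → {0,1}` (coded as a functional set of pairs)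
whose domain has infinite complement. -/
def IsSilver (p : Set (ℕ × Bool)) : Prop :=
  (∀ ⦃n : ℕ⦄ ⦃b b' : Bool⦄, (n, b) ∈ p → (n, b') ∈ p → b = b') ∧ ((sDom p)ᶜ).Infinite

/-- `q ≤ₙ p`: `q` extends `p` and the first `n` elements of `ℕ ∖ dom(q)` coincide with the
first `n` elements of `ℕ ∖ dom(p)`. -/
def SLEn (n : ℕ) (q p : Set (ℕ × Bool)) : Prop :=
  p ⊆ q ∧ ∀ i < n, Nat.nth (· ∈ (sDom q)ᶜ) i = Nat.nth (· ∈ (sDom p)ᶜ) i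

/-- `q ≤ₙ* p`: `q ≤ₙ p` and `q` is identically zero on `dom(q) ∖ dom(p)`. -/
def SLEnStar (n : ℕ) (q p : Set (ℕ × Bool)) : Prop :=
  SLEn n q p ∧ ∀ k ∈ sDom q \ sDom p, (k, true) ∉ q

/-- `[p] = {x ∈ 2^ℕ : p ⊆ x}`. -/
def cyl (p : Set (ℕ × Bool)) : Set (ℕ → Bool) := {x | ∀ ⦃n : ℕ⦄ ⦃b : Bool⦄, (n, b) ∈ p → x n = b}

/-- `Q⁰(p)`: the elements of `[p]` that are `0` at all but finitely many coordinates outside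
`dom(p)`. -/
def Qzero (p : Set (ℕ × Bool)) : Set (ℕ → Bool) :=
  {x ∈ cyl p | {k | k ∈ (sDom p)ᶜ ∧ x k = true}.Finite}

/-- An ω-cover of a subset `Q` of `2^ℕ`: a family of open subsets of `2^ℕ`, none containing
`Q`, such that every finite subset of `Q` is contained in some member. -/
def IsOmegaCoverOf (Q : Set (ℕ → Bool)) (𝒰 : Set (Set (ℕ → Bool))) : Prop :=
  (∀ U ∈ 𝒰, IsOpen U) ∧ (∀ U ∈ 𝒰, ¬ Q ⊆ U) ∧ ∀ F ⊆ Q, F.Finite → ∃ U ∈ 𝒰, F ⊆ U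

namespace Stmt17Aux

/-- first coordinate of the pair treated at stage `s`. -/
def nIdx (s : ℕ) : ℕ := (Nat.unpair (Nat.unpair s).1).1

/-- second coordinate of the pair treated at stage `s`. -/
def mIdx (s : ℕ) : ℕ :=
  if (Nat.unpair (Nat.unpair s).1).2 < (Nat.unpair (Nat.unpair s).1).1
  then (Nat.unpair (Nat.unpair s).1).2 else (Nat.unpair (Nat.unpair s).1).2 + 1

lemma nIdx_ne_mIdx (s : ℕ) : nIdx s ≠ mIdx s := by
  unfold nIdx mIdx; split <;> omega

/-- the bound that the point chosen at stage `s` must exceed. -/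
noncomputable def Bnd (p : ℕ → Set (ℕ × Bool)) (k : ℕ → ℕ) (s : ℕ) : ℕ :=
  max (Nat.nth (· ∈ (sDom (p (nIdx s)))ᶜ) (2*s + k (nIdx s)))
      (Nat.nth (· ∈ (sDom (p (mIdx s)))ᶜ) (2*s + k (mIdx s)))

lemma exists_pt (p : ℕ → Set (ℕ × Bool)) (hp : ∀ n, IsSilver (p n)) (s : ℕ) (c : ℕ) :
    ∃ x ∈ (sDom (p (mIdx s)))ᶜ, c < x :=
  (hp (mIdx s)).2.exists_gt c

/-- the point chosen at stage `s`. -/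
noncomputable def J (p : ℕ → Set (ℕ × Bool)) (k : ℕ → ℕ) (hp : ∀ n, IsSilver (p n)) : ℕ → ℕ
  | 0 => Classical.choose (exists_pt p hp 0 (Bnd p k 0))
  | s+1 => Classical.choose (exists_pt p hp (s+1) (max (Bnd p k (s+1)) (J p k hp s)))

variable {p : ℕ → Set (ℕ × Bool)} {k : ℕ → ℕ} (hp : ∀ n, IsSilver (p n))

lemma J_mem (s : ℕ) : J p k hp s ∈ (sDom (p (mIdx s)))ᶜ := by
  cases s with
  | zero => exact (Classical.choose_spec (exists_pt p hp 0 (Bnd p k 0))).1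
  | succ t => exact (Classical.choose_spec (exists_pt p hp (t+1)
      (max (Bnd p k (t+1)) (J p k hp t)))).1

lemma J_gt_bnd (s : ℕ) : Bnd p k s < J p k hp s := by
  cases s with
  | zero => exact (Classical.choose_spec (exists_pt p hp 0 (Bnd p k 0))).2
  | succ t =>
      have h := (Classical.choose_spec (exists_pt p hp (t+1) (max (Bnd p k (t+1)) (J p k hp t)))).2
      exact (le_max_left _ _).trans_lt h

lemma J_strictMono : StrictMono (J p k hp) := by
  apply strictMono_nat_of_lt_succ
  intro s
  exact lt_of_le_of_lt (le_max_right _ _)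
    (Classical.choose_spec (exists_pt p hp (s+1) (max (Bnd p k (s+1)) (J p k hp s)))).2

lemma J_gt_nth {r s : ℕ} (h : r = nIdx s ∨ r = mIdx s) :
    Nat.nth (· ∈ (sDom (p r))ᶜ) (2*s + k r) < J p k hp s := by
  rcases h with h | h <;> subst h
  · exact lt_of_le_of_lt (le_max_left _ _) (J_gt_bnd hp s)
  · exact lt_of_le_of_lt (le_max_right _ _) (J_gt_bnd hp s)

open Classical in
/-- the value given to the added point in `q (mIdx s)`. -/
noncomputable def vm (p : ℕ → Set (ℕ × Bool)) (k : ℕ → ℕ) (hp : ∀ n, IsSilver (p n))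
    (s : ℕ) : Bool :=
  if (J p k hp s, true) ∈ p (nIdx s) then false else true

/-- the conditions `q`. -/
noncomputable def qset (p : ℕ → Set (ℕ × Bool)) (k : ℕ → ℕ) (hp : ∀ n, IsSilver (p n))
    (r : ℕ) : Set (ℕ × Bool) :=
  p r ∪ {z | ∃ s, (r = mIdx s ∧ z = (J p k hp s, vm p k hp s)) ∨
      (r = nIdx s ∧ J p k hp s ∉ sDom (p r) ∧ z = (J p k hp s, false))}

lemma added_not_mem {r : ℕ} {z : ℕ × Bool}
    (h : ∃ s, (r = mIdx s ∧ z = (J p k hp s, vm p k hp s)) ∨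
      (r = nIdx s ∧ J p k hp s ∉ sDom (p r) ∧ z = (J p k hp s, false))) :
    z.1 ∉ sDom (p r) := by
  obtain ⟨s, h | h⟩ := h
  · obtain ⟨hr, hz⟩ := h; subst hr; rw [hz]; exact J_mem hp s
  · obtain ⟨hr, hJ, hz⟩ := h; rw [hz]; exact hJ

lemma mem_sDom_qset {r x : ℕ} (hx : x ∈ sDom (qset p k hp r)) (hx' : x ∉ sDom (p r)) :
    ∃ s, (r = nIdx s ∨ r = mIdx s) ∧ x = J p k hp s := by
  obtain ⟨b, hb | hb⟩ := hx
  · exact absurd ⟨b, hb⟩ hx'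
  · obtain ⟨s, h | h⟩ := hb
    · exact ⟨s, Or.inr h.1, congrArg Prod.fst h.2⟩
    · exact ⟨s, Or.inl h.1, congrArg Prod.fst h.2.2⟩

lemma qset_func (r : ℕ) : ∀ ⦃n : ℕ⦄ ⦃b b' : Bool⦄,
    (n, b) ∈ qset p k hp r → (n, b') ∈ qset p k hp r → b = b' := by
  intro x b b' hb hb'
  rcases hb with hb | hb
  · rcases hb' with hb' | hb'
    · exact (hp r).1 hb hb'
    · exact absurd ⟨b, hb⟩ (added_not_mem hp hb')
  · rcases hb' with hb' | hb'
    · exact absurd ⟨b', hb'⟩ (added_not_mem hp hb)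
    · obtain ⟨s, hs⟩ := hb
      obtain ⟨s', hs'⟩ := hb'
      have hJ : J p k hp s = J p k hp s' := by
        rcases hs with h | h <;> rcases hs' with h' | h' <;>
          simp_all
      have hss : s = s' := (J_strictMono hp).injective hJ
      subst hss
      rcases hs with h | h <;> rcases hs' with h' | h'
      · simp_all
      · exact absurd (h.1.symm.trans h'.1) (Ne.symm (nIdx_ne_mIdx s))
      · exact absurd (h'.1.symm.trans h.1) (Ne.symm (nIdx_ne_mIdx s))
      · simp_all

lemma sDom_subset (r : ℕ) : sDom (p r) ⊆ sDom (qset p k hp r) := by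
  rintro x ⟨b, hb⟩
  exact ⟨b, Or.inl hb⟩

lemma qset_compl_infinite (r : ℕ) : ((sDom (qset p k hp r))ᶜ).Infinite := by
  classical
  have hCinf : (setOf (· ∈ (sDom (p r))ᶜ)).Infinite := by
    exact (hp r).2
  set C : ℕ → Prop := (· ∈ (sDom (p r))ᶜ) with hC
  apply Set.infinite_of_forall_exists_gt
  intro a
  set s := a + 1 with hs
  set K := 2*s + k r with hK
  have key : ∀ i ≤ K, Nat.nth C i ∈ sDom (qset p k hp r) →
      ∃ s' < s, i = Nat.count C (J p k hp s') := by
    intro i hi hmem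
    have hCi : C (Nat.nth C i) := Nat.nth_mem_of_infinite hCinf i
    obtain ⟨s', hs', hJ⟩ := mem_sDom_qset hp hmem hCi
    refine ⟨s', ?_, ?_⟩
    · have h1 : Nat.nth C (2*s' + k r) < J p k hp s' := J_gt_nth hp hs'
      rw [← hJ] at h1
      have h2 : Nat.nth C i ≤ Nat.nth C K := Nat.nth_monotone hCinf hi
      have h3 := (Nat.nth_lt_nth hCinf).1 (lt_of_lt_of_le h1 h2)
      omega
    · rw [← hJ, Nat.count_nth_of_infinite hCinf]
  set A := (Finset.range (K+1)).filter (fun i => Nat.nth C i ∈ sDom (qset p k hp r)) with hA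
  have hAsub : A ⊆ (Finset.range s).image (fun s' => Nat.count C (J p k hp s')) := by
    intro i hi
    rw [hA, Finset.mem_filter, Finset.mem_range] at hi
    obtain ⟨s', h1, h2⟩ := key i (by omega) hi.2
    rw [Finset.mem_image]
    exact ⟨s', Finset.mem_range.2 h1, h2.symm⟩
  have hAcard : A.card ≤ s :=
    le_trans (Finset.card_le_card hAsub) (le_trans Finset.card_image_le (by simp))
  set B := (Finset.range (K+1)).filter
    (fun i => ¬ (Nat.nth C i ∈ sDom (qset p k hp r))) with hB
  have hABcard : A.card + B.card = K + 1 := by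
    rw [hA, hB, Finset.card_filter_add_card_filter_not, Finset.card_range]
  obtain ⟨i, hiB, his⟩ : ∃ i ∈ B, s ≤ i := by
    by_contra h
    push_neg at h
    have hsub : B ⊆ Finset.range s := fun i hi => Finset.mem_range.2 (h i hi)
    have := Finset.card_le_card hsub
    rw [Finset.card_range] at this
    omega
  rw [hB, Finset.mem_filter] at hiB
  refine ⟨Nat.nth C i, hiB.2, ?_⟩
  have : i ≤ Nat.nth C i := (Nat.nth_strictMono hCinf).le_apply
  omega

lemma qset_nth (r : ℕ) : ∀ i < k r,
    Nat.nth (· ∈ (sDom (qset p k hp r))ᶜ) i = Nat.nth (· ∈ (sDom (p r))ᶜ) i := by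
  classical
  intro i hi
  have hCinf : (setOf (· ∈ (sDom (p r))ᶜ)).Infinite := by
    exact (hp r).2
  set C : ℕ → Prop := (· ∈ (sDom (p r))ᶜ) with hC
  set D : ℕ → Prop := (· ∈ (sDom (qset p k hp r))ᶜ) with hD
  have agree : ∀ x, x ≤ Nat.nth C (k r) → (D x ↔ C x) := by
    intro x hx
    constructor
    · intro hDx hxp
      exact hDx (sDom_subset hp r hxp)
    · intro hCx hxq
      obtain ⟨s', hs', hJ⟩ := mem_sDom_qset hp hxq hCx
      have h1 : Nat.nth C (2*s' + k r) < J p k hp s' := J_gt_nth hp hs'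
      rw [← hJ] at h1
      have h2 : Nat.nth C (k r) ≤ Nat.nth C (2*s' + k r) :=
        Nat.nth_monotone hCinf (by omega)
      omega
  have hxlt : Nat.nth C i < Nat.nth C (k r) := (Nat.nth_lt_nth hCinf).2 hi
  have hCi : C (Nat.nth C i) := Nat.nth_mem_of_infinite hCinf i
  have hDi : D (Nat.nth C i) := (agree _ hxlt.le).2 hCi
  have hcnt : Nat.count D (Nat.nth C i) = Nat.count C (Nat.nth C i) := by
    rw [Nat.count_eq_card_filter_range, Nat.count_eq_card_filter_range]
    congr 1
    apply Finset.filter_congr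
    intro y hy
    rw [Finset.mem_range] at hy
    exact agree y (by omega)
  have hfin := Nat.nth_count hDi
  rw [hcnt, Nat.count_nth_of_infinite hCinf] at hfin
  exact hfin

lemma qset_wit {n m : ℕ} (hnm : n ≠ m) :
    {j : ℕ | ∃ b, (j, b) ∈ qset p k hp n ∧ (j, !b) ∈ qset p k hp m}.Infinite := by
  classical
  set v := if m < n then m else m - 1 with hv
  have hdec : ∀ t, nIdx (Nat.pair (Nat.pair n v) t) = n ∧
      mIdx (Nat.pair (Nat.pair n v) t) = m := by
    intro t
    constructor
    · simp [nIdx, Nat.unpair_pair]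
    · simp only [mIdx, Nat.unpair_pair]
      rcases lt_or_ge m n with h | h
      · simp [hv, h]
      · have h' : n < m := lt_of_le_of_ne h hnm
        have hv' : v = m - 1 := by rw [hv, if_neg (by omega)]
        rw [hv', if_neg (by omega)]
        omega
  refine Set.infinite_of_injective_forall_mem
    (f := fun t => J p k hp (Nat.pair (Nat.pair n v) t)) ?_ ?_
  · intro t1 t2 h
    have h2 := (J_strictMono hp).injective h
    have h3 := congrArg (fun x => (Nat.unpair x).2) h2
    simpa [Nat.unpair_pair] using h3
  · intro t
    obtain ⟨h1, h2⟩ := hdec t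
    set s := Nat.pair (Nat.pair n v) t with hsdef
    refine ⟨!(vm p k hp s), ?_, ?_⟩
    · by_cases h : (J p k hp s, true) ∈ p (nIdx s)
      · have hvm : vm p k hp s = false := by simp [vm, h]
        rw [hvm]
        exact Or.inl (show (J p k hp s, !false) ∈ p n by rw [← h1]; simpa using h)
      · have hvm : vm p k hp s = true := by simp [vm, h]
        rw [hvm, Bool.not_true]
        by_cases h2' : J p k hp s ∈ sDom (p n)
        · obtain ⟨b', hb'⟩ := h2'
          cases b' with
          | false => exact Or.inl hb'
          | true => exact absurd (show (J p k hp s, true) ∈ p (nIdx s) by rw [h1]; exact hb') h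
        · exact Or.inr ⟨s, Or.inr ⟨h1.symm, h2', rfl⟩⟩
    · rw [Bool.not_not]
      exact Or.inr ⟨s, Or.inl ⟨h2.symm, rfl⟩⟩

end Stmt17Aux

/-- Given Silver conditions `p_n` and numbers `k_n`, there are `q_n ≤_{k_n} p_n` that are
pairwise strongly disjoint: for `n ≠ m` there are infinitely many `k ∈ dom(q_n) ∩ dom(q_m)`
with `q_n(k) ≠ q_m(k)`. -/
theorem stmt17 (p : ℕ → Set (ℕ × Bool)) (k : ℕ → ℕ) (hp : ∀ n, IsSilver (p n)) :
    ∃ q : ℕ → Set (ℕ × Bool), (∀ n, IsSilver (q n) ∧ SLEn (k n) (q n) (p n)) ∧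
      ∀ n m, n ≠ m → {j | ∃ b, (j, b) ∈ q n ∧ (j, !b) ∈ q m}.Infinite := by
  classical
  refine ⟨Stmt17Aux.qset p k hp, fun r =>
    ⟨⟨Stmt17Aux.qset_func hp r, Stmt17Aux.qset_compl_infinite hp r⟩,
      fun z hz => Or.inl hz, Stmt17Aux.qset_nth hp r⟩,
    fun n m hnm => Stmt17Aux.qset_wit hp hnm⟩
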